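/- Let Φ be an n×n complex matrix whose Jordan normal form has no Jordan block of size greater than one for any eigenvalue of modulus one, and let v ∈ ℂⁿ. Then the sequence (Φᵏ v)_{k∈ℕ} is either bounded, or there exist constants h > 1, c > 0, d ≥ 0 such that ‖Φᵏ v‖ ≥ c·hᵏ − d for all k ∈ ℕ. -/

import Mathlib

theorem aux_k_pow_bdd (q : ℝ) (h0 : 0 ≤ q) (h1 : q < 1) :
    ∃ D : ℝ, 0 ≤ D ∧ ∀ k : ℕ, (k : ℝ) * q ^ k ≤ D := by
  obtain ⟨D, hD⟩ := (tendsto_self_mul_const_pow_of_lt_one h0 h1).bddAbove_range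
  refine ⟨D, le_trans (by simp) (hD ⟨0, rfl⟩), fun k => hD ⟨k, rfl⟩⟩

theorem aux_decay {n : ℕ} (f : Module.End ℂ (Fin n → ℂ)) :
    ∀ (m : ℕ) (μ : ℂ) (r : ℝ), ‖μ‖ < r → ∀ x : Fin n → ℂ,
      ((f - μ • 1) ^ m) x = 0 → ∃ C : ℝ, 0 ≤ C ∧ ∀ k : ℕ, ‖(f ^ k) x‖ ≤ C * r ^ k := by
  intro m
  induction m with
  | zero =>
    intro μ r hr x hx
    simp only [pow_zero, Module.End.one_apply] at hx
    exact ⟨0, le_refl 0, fun k => by simp [hx]⟩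
  | succ m ih =>
    intro μ r hr x hx
    set a := ‖μ‖ with ha
    have ha0 : 0 ≤ a := norm_nonneg μ
    set r' := (a + r) / 2 with hr'
    have har' : a < r' := by rw [hr']; linarith
    have hr'r : r' < r := by rw [hr']; linarith
    have hr'0 : 0 < r' := lt_of_le_of_lt ha0 har'
    have hr0 : 0 < r := lt_of_lt_of_le hr'0 hr'r.le
    have hy : ((f - μ • 1) ^ m) ((f - μ • 1) x) = 0 := by
      rw [← Module.End.mul_apply, ← pow_succ]; exact hx
    obtain ⟨C, hC0, hC⟩ := ih μ r' har' _ hy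
    have key : ∀ k : ℕ, ‖(f ^ k) x‖ ≤ (‖x‖ + C * k / r') * r' ^ k := by
      intro k
      induction k with
      | zero => simp
      | succ k ihk =>
        have h1 : (f ^ (k + 1)) x = μ • (f ^ k) x + (f ^ k) ((f - μ • 1) x) := by
          have hfx : f x = μ • x + (f - μ • 1) x := by simp
          rw [pow_succ, Module.End.mul_apply, hfx, map_add, map_smul]
        calc ‖(f ^ (k + 1)) x‖ ≤ ‖μ • (f ^ k) x‖ + ‖(f ^ k) ((f - μ • 1) x)‖ := by
              rw [h1]; exact norm_add_le _ _
          _ = a * ‖(f ^ k) x‖ + ‖(f ^ k) ((f - μ • 1) x)‖ := by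
              rw [norm_smul]
          _ ≤ r' * ((‖x‖ + C * k / r') * r' ^ k) + C * r' ^ k := by
              refine add_le_add (mul_le_mul har'.le ihk (norm_nonneg _) hr'0.le) (hC k)
          _ = (‖x‖ + C * (k + 1 : ℕ) / r') * r' ^ (k + 1) := by
              field_simp
              push_cast
              ring
    have hq0 : 0 ≤ r' / r := div_nonneg hr'0.le hr0.le
    have hq1 : r' / r < 1 := (div_lt_one hr0).mpr hr'r
    obtain ⟨D, hD0, hD⟩ := aux_k_pow_bdd _ hq0 hq1
    refine ⟨‖x‖ + C / r' * D, by positivity, fun k => (key k).trans ?_⟩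
    have h2 : (k : ℝ) * r' ^ k ≤ D * r ^ k := by
      have h3 := hD k
      rw [div_pow, ← mul_div_assoc, div_le_iff₀ (pow_pos hr0 k)] at h3
      exact h3
    have e1 : (‖x‖ + C * k / r') * r' ^ k = ‖x‖ * r' ^ k + (C / r') * ((k : ℝ) * r' ^ k) := by
      ring
    rw [e1]
    calc ‖x‖ * r' ^ k + (C / r') * ((k : ℝ) * r' ^ k)
        ≤ ‖x‖ * r ^ k + (C / r') * (D * r ^ k) := by
          refine add_le_add
            (mul_le_mul_of_nonneg_left (pow_le_pow_left₀ hr'0.le hr'r.le k) (norm_nonneg x))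
            (mul_le_mul_of_nonneg_left h2 (div_nonneg hC0 hr'0.le))
      _ = (‖x‖ + C / r' * D) * r ^ k := by ring

theorem aux_eigen {M : Type*} [AddCommGroup M] [Module ℂ M] (N : Module.End ℂ M)
    (hJ : ∀ x, (N ^ 2) x = 0 → N x = 0) :
    ∀ (m : ℕ) (x : M), (N ^ m) x = 0 → N x = 0 := by
  intro m
  induction m with
  | zero =>
    intro x hx
    simp only [pow_zero, Module.End.one_apply] at hx
    simp [hx]
  | succ m ih =>
    intro x hx
    have h1 : (N ^ m) (N x) = 0 := by rw [← Module.End.mul_apply, ← pow_succ]; exact hx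
    exact hJ x (by rw [pow_two, Module.End.mul_apply]; exact ih (N x) h1)

theorem aux_extract {M : Type*} [AddCommGroup M] [Module ℂ M] (N : Module.End ℂ M) :
    ∀ (m : ℕ) (x : M), x ≠ 0 → (N ^ m) x = 0 → ∃ s : ℕ, (N ^ s) x ≠ 0 ∧ N ((N ^ s) x) = 0 := by
  intro m
  induction m with
  | zero => intro x hx0 hx; exact absurd (by simpa using hx) hx0
  | succ m ih =>
    intro x hx0 hx
    by_cases hm : (N ^ m) x = 0
    · exact ih x hx0 hm
    · exact ⟨m, hm, by rw [← Module.End.mul_apply, ← pow_succ']; exact hx⟩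

theorem aux_pow_eigen {M : Type*} [AddCommGroup M] [Module ℂ M] (f : Module.End ℂ M)
    (μ : ℂ) (x : M) (hx : f x = μ • x) : ∀ k : ℕ, (f ^ k) x = μ ^ k • x := by
  intro k
  induction k with
  | zero => simp
  | succ k ih =>
    rw [pow_succ, Module.End.mul_apply, hx, map_smul, ih, smul_smul, ← pow_succ']

theorem bounded_or_exponential {n : ℕ} (Φ : Matrix (Fin n) (Fin n) ℂ)
    (hJordan : ∀ lam : ℂ, ‖lam‖ = 1 →
      ∀ w : Fin n → ℂ, ((Φ - lam • 1)^2).mulVec w = 0 → (Φ - lam • 1).mulVec w = 0)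
    (v : Fin n → ℂ) :
    (∃ C : ℝ, ∀ k : ℕ, ‖(Φ^k).mulVec v‖ ≤ C) ∨
      (∃ h c d : ℝ, 1 < h ∧ 0 < c ∧ 0 ≤ d ∧
        ∀ k : ℕ, c * h^k - d ≤ ‖(Φ^k).mulVec v‖) := by
  classical
  set f : Module.End ℂ (Fin n → ℂ) := Matrix.toLinAlgEquiv' Φ with hfdef
  have hbridge : ∀ (k : ℕ) (x : Fin n → ℂ), (Φ ^ k).mulVec x = (f ^ k) x := by
    intro k x
    rw [← Matrix.toLinAlgEquiv'_apply, map_pow]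
  have hJ : ∀ μ : ℂ, ‖μ‖ = 1 →
      ∀ x : Fin n → ℂ, ((((f - μ • 1) : Module.End ℂ (Fin n → ℂ))) ^ 2) x = 0 → (f - μ • 1) x = 0 := by
    intro μ hμ x hx
    have h2 : ((Φ - μ • 1) ^ 2).mulVec x = 0 := by
      rw [← Matrix.toLinAlgEquiv'_apply, map_pow, map_sub, map_smul, map_one]; exact hx
    have h3 := hJordan μ hμ x h2
    rwa [← Matrix.toLinAlgEquiv'_apply, map_sub, map_smul, map_one] at h3
  have htop : ⨆ μ : ℂ, f.maxGenEigenspace μ = ⊤ := Module.End.iSup_maxGenEigenspace_eq_top f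
  have hvtop : v ∈ ⨆ μ : ℂ, f.maxGenEigenspace μ := htop ▸ Submodule.mem_top
  obtain ⟨c, hcmem, hcsum⟩ := (Submodule.mem_iSup_iff_exists_finsupp _ v).mp hvtop
  by_cases H : ∀ μ : ℂ, 1 < ‖μ‖ → c μ = 0
  · -- bounded case
    left
    have hterm : ∀ μ : ℂ, ∃ C : ℝ, ∀ k : ℕ, ‖(f ^ k) (c μ)‖ ≤ C := by
      intro μ
      obtain ⟨m, hm⟩ := (Module.End.mem_maxGenEigenspace f μ (c μ)).mp (hcmem μ)
      rcases lt_trichotomy ‖μ‖ 1 with hlt | heq | hgt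
      · obtain ⟨C, _, hC⟩ := aux_decay f m μ 1 hlt _ hm
        exact ⟨C, fun k => by simpa using hC k⟩
      · have hx := aux_eigen (f - μ • 1) (hJ μ heq) m _ hm
        have hfx : f (c μ) = μ • c μ := by
          rwa [LinearMap.sub_apply, LinearMap.smul_apply, Module.End.one_apply, sub_eq_zero] at hx
        refine ⟨‖c μ‖, fun k => ?_⟩
        rw [aux_pow_eigen f μ _ hfx k, norm_smul, norm_pow, heq, one_pow,
          one_mul]
      · exact ⟨0, fun k => by simp [H μ hgt]⟩
    choose C hC using hterm
    refine ⟨∑ μ ∈ c.support, C μ, fun k => ?_⟩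
    rw [hbridge, ← hcsum, Finsupp.sum, map_sum]
    exact (norm_sum_le _ _).trans (Finset.sum_le_sum fun μ _ => hC μ k)
  · -- exponential case
    right
    push_neg at H
    obtain ⟨μ, hμ1, hw0⟩ := H
    set Fc : Submodule ℂ (Fin n → ℂ) := ⨆ ν : ℂ, ⨆ _ : ν ≠ μ, f.maxGenEigenspace ν with hFc
    have hdis : Disjoint (f.maxGenEigenspace μ) Fc := f.independent_maxGenEigenspace μ
    have hco : Codisjoint (f.maxGenEigenspace μ) Fc := by
      rw [codisjoint_iff, eq_top_iff, ← htop]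
      refine iSup_le fun ν => ?_
      rcases eq_or_ne ν μ with rfl | hν
      · exact le_sup_left
      · exact le_trans (le_iSup₂ (f := fun ν _ => f.maxGenEigenspace ν) ν hν) le_sup_right
    have hcompl : IsCompl (f.maxGenEigenspace μ) Fc := ⟨hdis, hco⟩
    set P : (Fin n → ℂ) →ₗ[ℂ] (Fin n → ℂ) :=
      (f.maxGenEigenspace μ).subtype ∘ₗ Submodule.linearProjOfIsCompl _ _ hcompl with hPdef
    have hP1 : ∀ x ∈ f.maxGenEigenspace μ, P x = x := by
      intro x hx
      have h1 : Submodule.linearProjOfIsCompl _ _ hcompl x = ⟨x, hx⟩ :=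
        Submodule.linearProjOfIsCompl_apply_left hcompl ⟨x, hx⟩
      simp [hPdef, h1]
    have hP0 : ∀ x ∈ Fc, P x = 0 := by
      intro x hx
      simp [hPdef]; exact (Submodule.linearProjOfIsCompl_apply_eq_zero_iff hcompl).mpr hx
    have hPmem : ∀ x : Fin n → ℂ, P x ∈ f.maxGenEigenspace μ := by
      intro x
      simp only [hPdef, LinearMap.comp_apply]
      exact (Submodule.linearProjOfIsCompl _ _ hcompl x).2
    have hinv : ∀ (ν : ℂ) (x : Fin n → ℂ), x ∈ f.maxGenEigenspace ν →
        f x ∈ f.maxGenEigenspace ν := fun ν x hx =>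
      Module.End.mapsTo_maxGenEigenspace_of_comm (Commute.refl f) ν hx
    have hFinv : ∀ x ∈ Fc, f x ∈ Fc := by
      have hmap : Submodule.map f Fc ≤ Fc := by
        rw [hFc, Submodule.map_iSup]
        refine iSup_le fun ν => ?_
        rw [Submodule.map_iSup]
        refine iSup_le fun hν => ?_
        refine le_trans ?_ (le_iSup₂ (f := fun ν _ => f.maxGenEigenspace ν) ν hν)
        rintro y ⟨x, hx, rfl⟩
        exact hinv ν x hx
      exact fun x hx => hmap ⟨x, hx, rfl⟩
    have hxsub : ∀ x : Fin n → ℂ, x - P x ∈ Fc := by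
      intro x
      have h1 : Submodule.linearProjOfIsCompl _ _ hcompl (x - P x) = 0 := by
        rw [map_sub, sub_eq_zero]
        exact (Submodule.linearProjOfIsCompl_apply_left hcompl _).symm
      exact (Submodule.linearProjOfIsCompl_apply_eq_zero_iff hcompl).mp h1
    have hPf : ∀ x : Fin n → ℂ, P (f x) = f (P x) := by
      intro x
      have hsplit : f x = f (P x) + f (x - P x) := by rw [← map_add]; ring_nf
      rw [hsplit, map_add, hP1 _ (hinv μ _ (hPmem x)), hP0 _ (hFinv _ (hxsub x)), add_zero]
    have hPfk : ∀ (k : ℕ) (x : Fin n → ℂ), P ((f ^ k) x) = (f ^ k) (P x) := by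
      intro k
      induction k with
      | zero => simp
      | succ k ih =>
        intro x
        simp only [pow_succ', Module.End.mul_apply, hPf, ih]
    have hPv : P v = c μ := by
      have h1 : P v = ∑ ν ∈ c.support, P (c ν) := by rw [← hcsum, Finsupp.sum, map_sum]
      rw [h1, Finset.sum_eq_single μ]
      · exact hP1 _ (hcmem μ)
      · intro ν _ hν
        exact hP0 _ ((le_iSup₂ (f := fun ν _ => f.maxGenEigenspace ν) ν hν) (hcmem ν))
      · intro hμs
        rw [Finsupp.notMem_support_iff.mp hμs, map_zero]
    obtain ⟨m, hm⟩ := (Module.End.mem_maxGenEigenspace f μ (c μ)).mp (hcmem μ)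
    obtain ⟨s, hs0, hsN⟩ := aux_extract (f - μ • 1) m (c μ) hw0 hm
    set u : Fin n → ℂ := (((f - μ • 1) : Module.End ℂ (Fin n → ℂ)) ^ s) (c μ) with hu
    have hfu : f u = μ • u := by
      rwa [LinearMap.sub_apply, LinearMap.smul_apply, Module.End.one_apply, sub_eq_zero] at hsN
    set T := LinearMap.toContinuousLinearMap
      ((((f - μ • 1) : Module.End ℂ (Fin n → ℂ)) ^ s) ∘ₗ P) with hT
    have hTk : ∀ k : ℕ, T ((f ^ k) v) = μ ^ k • u := by
      intro k
      have h1 : T ((f ^ k) v) = (((f - μ • 1) : Module.End ℂ (Fin n → ℂ)) ^ s) (P ((f ^ k) v)) :=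
        rfl
      have hcomm : Commute (f ^ k) (((f - μ • 1) : Module.End ℂ (Fin n → ℂ)) ^ s) :=
        (((Commute.refl f).sub_right ((Commute.one_right f).smul_right μ))).pow_pow k s
      rw [h1, hPfk, hPv, ← Module.End.mul_apply, ← hcomm.eq, Module.End.mul_apply, ← hu,
        aux_pow_eigen f μ u hfu k]
    have hunorm : 0 < ‖u‖ := norm_pos_iff.mpr hs0
    have hTv : T v = u := by simpa using hTk 0
    have hTnorm : 0 < ‖T‖ := by
      by_contra h0
      push_neg at h0
      have hT0 : ‖T‖ = 0 := le_antisymm h0 (norm_nonneg T)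
      have h := T.le_opNorm v
      rw [hTv, hT0, zero_mul] at h
      exact hunorm.not_ge h
    refine ⟨‖μ‖, ‖u‖ / ‖T‖, 0, hμ1, div_pos hunorm hTnorm, le_refl 0, fun k => ?_⟩
    rw [hbridge, sub_zero]
    have h := T.le_opNorm ((f ^ k) v)
    rw [hTk k, norm_smul, norm_pow] at h
    rw [div_mul_eq_mul_div, div_le_iff₀ hTnorm]
    linarith [h]
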